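/- Let Q(x) = x(x−r)(x−1)(x−t₁)(x−t₂) with 0 ≤ r ≤ 1 and 3 ≤ t₁ ≤ t₂. Then Q realizes the case L+, i.e. m ≤ m̃, where m is the minimum of the distances between consecutive midpoints of Q and m̃ is the minimum of the distances between consecutive roots of Q′. -/

import Mathlib

set_option maxHeartbeats 2000000

/-- For `Q(x) = x(x-r)(x-1)(x-t₁)(x-t₂)` with `0 ≤ r ≤ 1` and `3 ≤ t₁ ≤ t₂`, the case L+
holds: `m ≤ m̃`, where `m` is the minimum of the distances between consecutive midpoints
of `Q` and `m̃` is the minimum of the distances between consecutive roots of `Q'`. -/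
theorem Q_family_Lplus
    (r t₁ t₂ : ℝ) (hr0 : 0 ≤ r) (hr1 : r ≤ 1) (ht₁ : 3 ≤ t₁) (ht : t₁ ≤ t₂)
    (ξ₁ ξ₂ ξ₃ ξ₄ : ℝ) (hξ12 : ξ₁ ≤ ξ₂) (hξ23 : ξ₂ ≤ ξ₃) (hξ34 : ξ₃ ≤ ξ₄)
    (hder : ∀ x : ℝ,
      deriv (fun t : ℝ => t * (t - r) * (t - 1) * (t - t₁) * (t - t₂)) x
        = 5 * (x - ξ₁) * (x - ξ₂) * (x - ξ₃) * (x - ξ₄))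
    (z₁ z₂ z₃ z₄ m mt : ℝ)
    (hz₁ : z₁ = r / 2) (hz₂ : z₂ = (r + 1) / 2)
    (hz₃ : z₃ = (1 + t₁) / 2) (hz₄ : z₄ = (t₁ + t₂) / 2)
    (hm : m = min (min (z₂ - z₁) (z₃ - z₂)) (z₄ - z₃))
    (hmt : mt = min (min (ξ₂ - ξ₁) (ξ₃ - ξ₂)) (ξ₄ - ξ₃)) :
    m ≤ mt := by
  -- explicit formula for the derivative
  have hD : ∀ x : ℝ, deriv (fun t : ℝ => t * (t - r) * (t - 1) * (t - t₁) * (t - t₂)) x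
      = (x-r)*(x-1)*(x-t₁)*(x-t₂) + x*(x-1)*(x-t₁)*(x-t₂) + x*(x-r)*(x-t₁)*(x-t₂)
        + x*(x-r)*(x-1)*(x-t₂) + x*(x-r)*(x-1)*(x-t₁) := by
    intro x
    have h1 : HasDerivAt (fun t : ℝ => t) 1 x := hasDerivAt_id x
    have h2 : HasDerivAt (fun t : ℝ => t - r) 1 x := (hasDerivAt_id x).sub_const r
    have h3 : HasDerivAt (fun t : ℝ => t - 1) 1 x := (hasDerivAt_id x).sub_const 1
    have h4 : HasDerivAt (fun t : ℝ => t - t₁) 1 x := (hasDerivAt_id x).sub_const t₁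
    have h5 : HasDerivAt (fun t : ℝ => t - t₂) 1 x := (hasDerivAt_id x).sub_const t₂
    have h : HasDerivAt (fun t : ℝ => t * (t - r) * (t - 1) * (t - t₁) * (t - t₂)) _ x :=
      (((h1.mul h2).mul h3).mul h4).mul h5
    rw [h.deriv]; simp only [Pi.mul_apply]; ring
  have hkey : ∀ x : ℝ, (x-r)*(x-1)*(x-t₁)*(x-t₂) + x*(x-1)*(x-t₁)*(x-t₂) + x*(x-r)*(x-t₁)*(x-t₂)
        + x*(x-r)*(x-1)*(x-t₂) + x*(x-r)*(x-1)*(x-t₁)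
      = 5 * (x - ξ₁) * (x - ξ₂) * (x - ξ₃) * (x - ξ₄) :=
    fun x => (hD x).symm.trans (hder x)
  have hw : (0:ℝ) ≤ 1 - r := by linarith
  have hu : (0:ℝ) ≤ t₁ - 3 := by linarith
  have hs : (0:ℝ) ≤ t₂ - t₁ := by linarith
  -- Rolle on [0,1] produces a critical point in (0,1)
  obtain ⟨c, hcmem, hc0⟩ := exists_deriv_eq_zero
    (f := fun t : ℝ => t * (t - r) * (t - 1) * (t - t₁) * (t - t₂))
    (by norm_num : (0:ℝ) < 1)
    (by fun_prop)
    (by norm_num)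
  obtain ⟨hc0', hc1⟩ := hcmem
  have hprodc : 5 * (c - ξ₁) * (c - ξ₂) * (c - ξ₃) * (c - ξ₄) = 0 := by
    rw [← hder c]; exact hc0
  -- ξ₁ < 1
  have hF3 : ξ₁ < 1 := by
    by_contra h'
    push_neg at h'
    have p1 : 0 < ξ₁ - c := by linarith
    have p2 : 0 < ξ₂ - c := by linarith
    have p3 : 0 < ξ₃ - c := by linarith
    have p4 : 0 < ξ₄ - c := by linarith
    linarith [hprodc.symm.le, mul_pos (mul_pos (mul_pos p1 p2) p3) p4]
  -- t₁ ≤ ξ₄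
  have hF2 : t₁ ≤ ξ₄ := by
    by_contra h'
    push_neg at h'
    have e : 5*(t₁-ξ₁)*(t₁-ξ₂)*(t₁-ξ₃)*(t₁-ξ₄) = t₁*(t₁-r)*(t₁-1)*(t₁-t₂) := by
      linear_combination - hkey t₁
    have p1 : 0 < t₁ - ξ₁ := by linarith
    have p2 : 0 < t₁ - ξ₂ := by linarith
    have p3 : 0 < t₁ - ξ₃ := by linarith
    have p4 : 0 < t₁ - ξ₄ := by linarith
    have hP : 0 < t₁*(t₁-r)*(t₁-1) :=
      mul_pos (mul_pos (by linarith) (by linarith)) (by linarith)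
    linarith [e, mul_pos (mul_pos (mul_pos p1 p2) p3) p4,
      mul_nonneg hP.le hs]
  -- ξ₂ ≤ 1
  have hF4 : ξ₂ ≤ 1 := by
    by_contra h'
    push_neg at h'
    have e : 5*(1-ξ₁)*(1-ξ₂)*(1-ξ₃)*(1-ξ₄) = (1-r)*(1-t₁)*(1-t₂) := by
      linear_combination - hkey 1
    have p1 : 0 < 1 - ξ₁ := by linarith
    have p2 : 0 < ξ₂ - 1 := by linarith
    have p3 : 0 < ξ₃ - 1 := by linarith
    have p4 : 0 < ξ₄ - 1 := by linarith
    have hq : 0 ≤ (1-r)*((t₁-1)*(t₂-1)) :=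
      mul_nonneg hw (mul_nonneg (by linarith : (0:ℝ) ≤ t₁-1) (by linarith : (0:ℝ) ≤ t₂-1))
    linarith [e, mul_pos (mul_pos (mul_pos p1 p2) p3) p4, hq]
  -- 7/4 < ξ₃
  have hF5 : (7:ℝ)/4 < ξ₃ := by
    by_contra h'
    push_neg at h'
    have e := hkey (7/4)
    have hA : (0:ℝ) ≤ (t₁-3)*(t₂-7/4) := mul_nonneg hu (by linarith)
    have hB : (0:ℝ) ≤ (t₂-3)*(t₁-7/4) := mul_nonneg (by linarith) (by linarith)
    have hA1 : (0:ℝ) ≤ (1-r)*((t₁-3)*(t₂-7/4)) := mul_nonneg hw hA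
    have hB1 : (0:ℝ) ≤ (1-r)*((t₂-3)*(t₁-7/4)) := mul_nonneg hw hB
    have hC1 : (0:ℝ) ≤ (1-r)*(t₁-3) := mul_nonneg hw hu
    have hC2 : (0:ℝ) ≤ (1-r)*(t₂-3) := mul_nonneg hw (by linarith)
    have p1 : (0:ℝ) < 7/4 - ξ₁ := by linarith
    have p2 : (0:ℝ) ≤ 7/4 - ξ₂ := by linarith
    have p3 : (0:ℝ) ≤ 7/4 - ξ₃ := by linarith
    have p4 : (0:ℝ) < ξ₄ - 7/4 := by linarith
    linarith [e, mul_nonneg (mul_nonneg (mul_nonneg p1.le p2) p3) p4.le,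
      hA, hB, hA1, hB1, hC1, hC2]
  -- ξ₃ ≤ t₁ - 1/2
  have hF6 : ξ₃ ≤ t₁ - 1/2 := by
    by_contra h'
    push_neg at h'
    have e := hkey (t₁ - 1/2)
    have p1 : (0:ℝ) < t₁-1/2 - ξ₁ := by linarith
    have p2 : (0:ℝ) < t₁-1/2 - ξ₂ := by linarith
    have p3 : (0:ℝ) < ξ₃ - (t₁-1/2) := by linarith
    have p4 : (0:ℝ) < ξ₄ - (t₁-1/2) := by linarith
    have huu : (0:ℝ) ≤ (t₁-3)*(t₁-3) := mul_nonneg hu hu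
    have c1 : (0:ℝ) ≤ (t₂-t₁)*(1-r) := mul_nonneg hs hw
    have c2 : (0:ℝ) ≤ (t₂-t₁)*(t₁-3) := mul_nonneg hs hu
    have c3 : (0:ℝ) ≤ (t₂-t₁)*((t₁-3)*(1-r)) := mul_nonneg hs (mul_nonneg hu hw)
    have c4 : (0:ℝ) ≤ (t₂-t₁)*((t₁-3)*(t₁-3)) := mul_nonneg hs huu
    have c5 : (0:ℝ) ≤ (t₂-t₁)*((t₁-3)*(t₁-3)*(1-r)) := mul_nonneg hs (mul_nonneg huu hw)
    have c6 : (0:ℝ) ≤ (t₂-t₁)*((t₁-3)*(t₁-3)*(t₁-3)) := mul_nonneg hs (mul_nonneg huu hu)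
    have c7 : (0:ℝ) ≤ (t₁-3)*(1-r) := mul_nonneg hu hw
    have c8 : (0:ℝ) ≤ (t₁-3)*(t₁-3)*(1-r) := mul_nonneg huu hw
    have c9 : (0:ℝ) ≤ (t₁-3)*(t₁-3)*(t₁-3) := mul_nonneg huu hu
    linarith [e, mul_pos (mul_pos (mul_pos p1 p2) p3) p4,
      c1, c2, c3, c4, c5, c6, c7, c8, c9, huu]
  -- (r+1)/2 ≤ ξ₂
  have hF7 : (r+1)/2 ≤ ξ₂ := by
    by_contra h'
    push_neg at h'
    have e := hkey ((r+1)/2)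
    have p1 : (0:ℝ) < (r+1)/2 - ξ₁ := by linarith
    have p2 : (0:ℝ) < (r+1)/2 - ξ₂ := by linarith
    have p3 : (0:ℝ) < ξ₃ - (r+1)/2 := by linarith
    have p4 : (0:ℝ) < ξ₄ - (r+1)/2 := by linarith
    have hu' : (0:ℝ) ≤ t₁ - (r+1)/2 - 2 := by linarith
    have hv' : (0:ℝ) ≤ t₂ - (r+1)/2 - 2 := by linarith
    have w2 : (0:ℝ) ≤ (1-r)*(1-r) := mul_nonneg hw hw
    have d1 : (0:ℝ) ≤ (1-r)*(1-r)*((t₁-(r+1)/2-2)*(t₂-(r+1)/2-2)) :=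
      mul_nonneg w2 (mul_nonneg hu' hv')
    have d2 : (0:ℝ) ≤ (1-r)*(1-r)*(t₁-(r+1)/2-2) := mul_nonneg w2 hu'
    have d3 : (0:ℝ) ≤ (1-r)*(1-r)*(t₂-(r+1)/2-2) := mul_nonneg w2 hv'
    have d4 : (0:ℝ) ≤ (1-r)*(1-r)*(1-r)*(t₁-(r+1)/2-2) := mul_nonneg (mul_nonneg w2 hw) hu'
    have d5 : (0:ℝ) ≤ (1-r)*(1-r)*(1-r)*(t₂-(r+1)/2-2) := mul_nonneg (mul_nonneg w2 hw) hv'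
    have d6 : (0:ℝ) ≤ (1-r)*(1-r)*(1-r) := mul_nonneg w2 hw
    linarith [e, mul_pos (mul_pos (mul_pos p1 p2) p3) p4, d1, d2, d3, d4, d5, d6]
  -- ξ₁ ≤ r/2
  have hF8 : ξ₁ ≤ r/2 := by
    by_contra h'
    push_neg at h'
    have e := hkey (r/2)
    have p1 : (0:ℝ) < ξ₁ - r/2 := by linarith
    have p2 : (0:ℝ) < ξ₂ - r/2 := by linarith
    have p3 : (0:ℝ) < ξ₃ - r/2 := by linarith
    have p4 : (0:ℝ) < ξ₄ - r/2 := by linarith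
    have r2 : (0:ℝ) ≤ r*r := mul_nonneg hr0 hr0
    have g1 : (0:ℝ) ≤ r*r*((t₁-r/2)*(t₂-r/2)) :=
      mul_nonneg r2 (mul_nonneg (by linarith) (by linarith))
    have g2 : (0:ℝ) ≤ r*r*((1-r/2)*(t₁+t₂-r)) :=
      mul_nonneg r2 (mul_nonneg (by linarith) (by linarith))
    linarith [e, mul_pos (mul_pos (mul_pos p1 p2) p3) p4, g1, g2]
  -- assemble
  have hm12 : m ≤ 1/2 := by
    rw [hm]
    calc min (min (z₂ - z₁) (z₃ - z₂)) (z₄ - z₃) ≤ min (z₂ - z₁) (z₃ - z₂) := min_le_left _ _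
    _ ≤ z₂ - z₁ := min_le_left _ _
    _ = 1/2 := by rw [hz₁, hz₂]; ring
  have hmt12 : 1/2 ≤ mt := by
    rw [hmt]
    exact le_min (le_min (by linarith) (by linarith)) (by linarith)
  linarith
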